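/- Let K ≥ 1 be an integer, 0 < γ < 1 and η > 0 reals. There exists an integer n₀ such that the following holds: if G is a (γ,η)-splittable graph of order n ≥ n₀ with vertex set [n], and k = (k₁,…,k_n) is a vector of integers with 1 ≤ k_i ≤ K for all i, then the blow-up G^k is (γ/2, K·η)-splittable. -/
import Mathlib


/-- `G` (of order `n`) is `(γ, η)`-splittable: one can delete a set `S` of fewer than
`n ^ (1 - γ)` vertices so that every connected component of `G - S` has order at most `η * n`. -/
def Splittable {α : Type*} [Fintype α] (G : SimpleGraph α) (γ η : ℝ) : Prop :=
  ∃ S : Finset α, (S.card : ℝ) < (Fintype.card α : ℝ) ^ ((1 : ℝ) - γ) ∧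
    ∀ c : (G.induce ((↑S : Set α)ᶜ)).ConnectedComponent,
      (c.supp.ncard : ℝ) ≤ η * (Fintype.card α : ℝ)

/-- The blow-up of a graph `G` on `[n]`: vertex `i` is replaced by a clique of order `k i`,
and each edge `ij` is replaced by a complete bipartite graph between the cliques. -/
def Blowup {n : ℕ} (G : SimpleGraph (Fin n)) (k : Fin n → ℕ) :
    SimpleGraph (Σ i : Fin n, Fin (k i)) :=
  SimpleGraph.fromRel (fun u v => u.1 = v.1 ∨ G.Adj u.1 v.1)

private lemma ncard_prod_univ {β γ : Type*} [Fintype β] [Fintype γ] (s : Set β) :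
    (s ×ˢ (Set.univ : Set γ)).ncard = s.ncard * Fintype.card γ := by
  classical
  rw [Set.ncard_eq_toFinset_card', Set.ncard_eq_toFinset_card', Set.toFinset_prod,
    Set.toFinset_univ, Finset.card_product, Finset.card_univ]

theorem stmt9 (K : ℕ) (hK : 1 ≤ K) (γ η : ℝ) (hγ0 : 0 < γ) (hγ1 : γ < 1) (hη : 0 < η) :
    ∃ n₀ : ℕ, ∀ n ≥ n₀, ∀ G : SimpleGraph (Fin n), Splittable G γ η →
      ∀ k : Fin n → ℕ, (∀ i, 1 ≤ k i ∧ k i ≤ K) →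
        Splittable (Blowup G k) (γ / 2) ((K : ℝ) * η) := by
  classical
  refine ⟨max 1 ⌈(K : ℝ) ^ ((2 : ℝ) / γ)⌉₊, fun n hn G hG k hk => ?_⟩
  have hn1 : 1 ≤ n := le_trans (le_max_left _ _) hn
  have hnR : (0 : ℝ) < n := by exact_mod_cast hn1
  have hKn : (K : ℝ) ≤ (n : ℝ) ^ (γ / 2) := by
    have h1 : ((K : ℝ) ^ ((2 : ℝ) / γ)) ≤ (n : ℝ) := by
      calc ((K : ℝ) ^ ((2 : ℝ) / γ)) ≤ ⌈(K : ℝ) ^ ((2 : ℝ) / γ)⌉₊ := Nat.le_ceil _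
        _ ≤ (n : ℝ) := by exact_mod_cast le_trans (le_max_right _ _) hn
    have h2 : ((K : ℝ) ^ ((2 : ℝ) / γ)) ^ (γ / 2) ≤ (n : ℝ) ^ (γ / 2) :=
      Real.rpow_le_rpow (Real.rpow_nonneg (Nat.cast_nonneg _) _) h1
        (by positivity)
    calc (K : ℝ) = ((K : ℝ) ^ ((2 : ℝ) / γ)) ^ (γ / 2) := by
          rw [← Real.rpow_mul (Nat.cast_nonneg _), div_mul_div_comm,
            mul_comm (2:ℝ) γ, div_self (by positivity), Real.rpow_one]
      _ ≤ (n : ℝ) ^ (γ / 2) := h2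
  obtain ⟨S, hScard, hScomp⟩ := hG
  set α := (Σ i : Fin n, Fin (k i)) with hα
  set N := Fintype.card α with hN
  have hNval : N = ∑ i, k i := by simp [hN, hα, Fintype.card_sigma]
  have hnN : n ≤ N := by
    rw [hNval]
    calc n = ∑ _i : Fin n, 1 := by simp
      _ ≤ ∑ i, k i := Finset.sum_le_sum fun i _ => (hk i).1
  set S' : Finset α := S.sigma (fun _ => Finset.univ) with hS'
  have hmemS' : ∀ x : α, x ∈ S' ↔ x.1 ∈ S := by
    rintro ⟨i, j⟩
    exact ⟨fun h => (Finset.mem_sigma.1 h).1,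
      fun h => Finset.mem_sigma.2 ⟨h, Finset.mem_univ _⟩⟩
  -- the projection
  have hπaux : ∀ x : α, x ∈ (↑S' : Set α)ᶜ → x.1 ∈ (↑S : Set (Fin n))ᶜ := by
    intro x hx hxS
    exact hx ((hmemS' x).2 hxS)
  set π : {x : α // x ∈ (↑S' : Set α)ᶜ} → {i : Fin n // i ∈ (↑S : Set (Fin n))ᶜ} :=
    fun x => ⟨x.1.1, hπaux x.1 x.2⟩ with hπ
  have hstep : ∀ a b, ((Blowup G k).induce ((↑S' : Set α)ᶜ)).Adj a b →
      π a = π b ∨ (G.induce ((↑S : Set (Fin n))ᶜ)).Adj (π a) (π b) := by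
    intro a b hab
    have h : (Blowup G k).Adj a.1 b.1 := hab
    rw [Blowup, SimpleGraph.fromRel_adj] at h
    rcases h.2 with (h' | h')
    · rcases h' with (h' | h')
      · exact Or.inl (Subtype.ext h')
      · exact Or.inr h'
    · rcases h' with (h' | h')
      · exact Or.inl (Subtype.ext h'.symm)
      · exact Or.inr h'.symm
  have hreach : ∀ a b, ((Blowup G k).induce ((↑S' : Set α)ᶜ)).Reachable a b →
      (G.induce ((↑S : Set (Fin n))ᶜ)).Reachable (π a) (π b) := by
    intro a b hab
    obtain ⟨w⟩ := hab
    induction w with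
    | nil => exact SimpleGraph.Reachable.refl _
    | cons h p ih =>
      rcases hstep _ _ h with (he | hadj)
      · rwa [he]
      · exact (hadj.reachable).trans ih
  refine ⟨S', ?_, ?_⟩
  · -- cardinality bound
    have hS'card : (S'.card : ℕ) ≤ K * S.card := by
      rw [hS', Finset.card_sigma]
      calc ∑ i ∈ S, (Finset.univ : Finset (Fin (k i))).card
          = ∑ i ∈ S, k i := by simp
        _ ≤ ∑ _i ∈ S, K := Finset.sum_le_sum fun i _ => (hk i).2
        _ = K * S.card := by rw [Finset.sum_const, smul_eq_mul, mul_comm]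
    have hScardn : (S.card : ℝ) < (n : ℝ) ^ ((1 : ℝ) - γ) := by
      simpa using hScard
    have hKpos : (0 : ℝ) < K := by exact_mod_cast hK
    calc (S'.card : ℝ) ≤ (K : ℝ) * S.card := by exact_mod_cast hS'card
      _ < (K : ℝ) * (n : ℝ) ^ ((1 : ℝ) - γ) := by
          exact mul_lt_mul_of_pos_left hScardn hKpos
      _ ≤ (n : ℝ) ^ (γ / 2) * (n : ℝ) ^ ((1 : ℝ) - γ) := by
          apply mul_le_mul_of_nonneg_right hKn (Real.rpow_nonneg hnR.le _)
      _ = (n : ℝ) ^ ((1 : ℝ) - γ / 2) := by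
          rw [← Real.rpow_add hnR]; ring_nf
      _ ≤ (N : ℝ) ^ ((1 : ℝ) - γ / 2) := by
          apply Real.rpow_le_rpow hnR.le (by exact_mod_cast hnN)
          linarith
  · -- component bound
    intro c
    obtain ⟨v, rfl⟩ := c.exists_rep
    set d := (G.induce ((↑S : Set (Fin n))ᶜ)).connectedComponentMk (π v) with hd
    -- injective map into d.supp ×ˢ univ
    set F : {x : α // x ∈ (↑S' : Set α)ᶜ} →
        {i : Fin n // i ∈ (↑S : Set (Fin n))ᶜ} × Fin K :=
      fun x => (π x, Fin.castLE (hk x.1.1).2 x.1.2) with hF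
    have hFinj : Function.Injective F := by
      rintro ⟨⟨i, j⟩, hi⟩ ⟨⟨i', j'⟩, hi'⟩ h
      simp only [hF, Prod.mk.injEq, hπ] at h
      obtain ⟨h1, h2⟩ := h
      have hii : i = i' := congrArg Subtype.val h1
      subst hii
      have hval : (j : ℕ) = (j' : ℕ) := by simpa using congrArg Fin.val h2
      have hjj : j = j' := Fin.ext hval
      subst hjj
      rfl
    have hsub : F '' (((Blowup G k).induce ((↑S' : Set α)ᶜ)).connectedComponentMk v).supp
        ⊆ d.supp ×ˢ (Set.univ : Set (Fin K)) := by
      rintro _ ⟨x, hx, rfl⟩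
      rw [SimpleGraph.ConnectedComponent.mem_supp_iff] at hx
      constructor
      · rw [SimpleGraph.ConnectedComponent.mem_supp_iff, hd]
        apply SimpleGraph.ConnectedComponent.sound
        exact hreach _ _ (SimpleGraph.ConnectedComponent.exact hx)
      · trivial
    have hle : (((Blowup G k).induce ((↑S' : Set α)ᶜ)).connectedComponentMk v).supp.ncard
        ≤ d.supp.ncard * K := by
      calc (((Blowup G k).induce ((↑S' : Set α)ᶜ)).connectedComponentMk v).supp.ncard
          ≤ (d.supp ×ˢ (Set.univ : Set (Fin K))).ncard := by
            apply Set.ncard_le_ncard_of_injOn F (fun a ha => hsub ⟨a, ha, rfl⟩)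
              (hFinj.injOn) (Set.toFinite _)
        _ = d.supp.ncard * K := by rw [ncard_prod_univ]; simp
    have hdbound : (d.supp.ncard : ℝ) ≤ η * n := by
      simpa using hScomp d
    have hηn : η * (n : ℝ) ≤ η * N := by
      apply mul_le_mul_of_nonneg_left (by exact_mod_cast hnN) hη.le
    calc ((((Blowup G k).induce ((↑S' : Set α)ᶜ)).connectedComponentMk v).supp.ncard : ℝ)
        ≤ (d.supp.ncard : ℝ) * K := by exact_mod_cast hle
      _ ≤ (η * n) * K := by
          apply mul_le_mul_of_nonneg_right hdbound (Nat.cast_nonneg _)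
      _ ≤ (η * N) * K := by
          apply mul_le_mul_of_nonneg_right hηn (Nat.cast_nonneg _)
      _ = (K : ℝ) * η * N := by ring
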